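/- Let β ∈ (1,2) be the d-Bonacci number. Define l = -1/2 and consider the orbit of l under the symmetric β-transformation T. Then T(l) = -β/2 + 1, and the intervals Y_k for 1 ≤ k ≤ d defined by Y_k = [T^k l, T^{k+1} l) for 1 ≤ k ≤ d-1 and Y_d = [T^d l, 1/2), together with their negatives, partition X = [-1/2, β/2-1) ∪ [1-β/2, 1/2), and T maps Y_k onto Y_{k+1} bijectively (up to endpoints) for 1 ≤ k ≤ d-1, while T(Y_d) = (−Y_1) ∪ (−Y_2) ∪ ... ∪ (−Y_d). -/

import Mathlib

private lemma Ico_disj' {a b c e : ℝ} (h : b ≤ c) : Set.Ico a b ∩ Set.Ico c e = ∅ := by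
  rw [Set.eq_empty_iff_forall_notMem]
  rintro x ⟨⟨_, h2⟩, h3, _⟩
  linarith

private lemma iUnion_Ico_chain (f : ℕ → ℝ) (hf : Monotone f) :
    ∀ n, 1 ≤ n → (⋃ k ∈ Finset.Icc 1 n, Set.Ico (f (k-1)) (f k)) = Set.Ico (f 0) (f n) := by
  intro n hn
  induction n with
  | zero => omega
  | succ m ih =>
    rcases Nat.eq_zero_or_pos m with hm | hm
    · subst hm; simp
    · rw [← Finset.insert_Icc_right_eq_Icc_add_one (by omega : 1 ≤ m + 1), Finset.set_biUnion_insert, ih hm]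
      simp only [Nat.add_sub_cancel]
      rw [Set.union_comm, Set.Ico_union_Ico_eq_Ico (hf (Nat.zero_le m)) (hf (Nat.le_add_right m 1))]

private lemma iUnion_Ico_chain_neg (f : ℕ → ℝ) (hf : Monotone f) :
    ∀ n, 1 ≤ n → (⋃ k ∈ Finset.Icc 1 n, Set.Ico (-(f k)) (-(f (k-1)))) = Set.Ico (-(f n)) (-(f 0)) := by
  intro n hn
  induction n with
  | zero => omega
  | succ m ih =>
    rcases Nat.eq_zero_or_pos m with hm | hm
    · subst hm; simp
    · rw [← Finset.insert_Icc_right_eq_Icc_add_one (by omega : 1 ≤ m + 1), Finset.set_biUnion_insert, ih hm]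
      simp only [Nat.add_sub_cancel]
      rw [Set.Ico_union_Ico_eq_Ico (neg_le_neg (hf (Nat.le_add_right m 1))) (neg_le_neg (hf (Nat.zero_le m)))]

set_option maxHeartbeats 1600000 in
/-- The orbit of `l = -1/2` under the symmetric β-transformation `T` determines intervals
`Y_1, ..., Y_d` whose union with their (suitably oriented) negatives `N_1, ..., N_d`
partitions `X`; `T l = 1 - β/2`, `T` maps `Y_k` bijectively onto `Y_{k+1}` for `k < d`,
and `T(Y_d) = N_1 ∪ ... ∪ N_d`. -/
theorem orbit_intervals (d : ℕ) (hd : 2 ≤ d) (β : ℝ) (h1 : 1 < β) (h2 : β < 2)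
    (hβ : β ^ d = ∑ i ∈ Finset.range d, β ^ i)
    (T : ℝ → ℝ) (hT : ∀ x, T x = β * x - (⌊β * x + 1/2⌋ : ℤ))
    (X : Set ℝ) (hX : X = Set.Ico (-(1 : ℝ)/2) (β/2 - 1) ∪ Set.Ico (1 - β/2) (1/2 : ℝ))
    (Y N : ℕ → Set ℝ)
    (hY : ∀ k, Y k = if k = d then Set.Ico (T^[d] (-(1:ℝ)/2)) (1/2 : ℝ)
      else Set.Ico (T^[k] (-(1:ℝ)/2)) (T^[k+1] (-(1:ℝ)/2)))
    (hN : ∀ k, N k = if k = d then Set.Ico (-(1:ℝ)/2) (-(T^[d] (-(1:ℝ)/2)))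
      else Set.Ico (-(T^[k+1] (-(1:ℝ)/2))) (-(T^[k] (-(1:ℝ)/2)))) :
    T (-(1:ℝ)/2) = 1 - β/2 ∧
    (⋃ k ∈ Finset.Icc 1 d, (Y k ∪ N k)) = X ∧
    (∀ k ∈ Finset.Icc 1 d, ∀ j ∈ Finset.Icc 1 d,
      (k ≠ j → Y k ∩ Y j = ∅ ∧ N k ∩ N j = ∅) ∧ Y k ∩ N j = ∅) ∧
    (∀ k ∈ Finset.Icc 1 (d-1), Set.BijOn T (Y k) (Y (k+1))) ∧
    T '' Y d = ⋃ k ∈ Finset.Icc 1 d, N k := by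
  have hβpos : (0:ℝ) < β := by linarith
  set c : ℕ → ℝ := fun k => β ^ k * (2 - β) / 2 with hc_def
  have hβ2 : β ^ d * (2 - β) = 1 := by
    have hg := geom_sum_mul β d
    rw [← hβ] at hg
    nlinarith [hg]
  have hcpos : ∀ k, 0 < c k := by
    intro k
    have hp : 0 < β ^ k := pow_pos hβpos k
    simp only [hc_def]
    have : (0:ℝ) < 2 - β := by linarith
    positivity
  have hmul : ∀ k, β * c k = c (k + 1) := by
    intro k
    simp only [hc_def, pow_succ]
    ring
  have hcmono : StrictMono c := by
    apply strictMono_nat_of_lt_succ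
    intro k
    have h3 := hcpos k
    have h4 := hmul k
    nlinarith
  have hcd : c d = 1/2 := by
    simp only [hc_def]
    rw [hβ2]
  have hc0 : c 0 = 1 - β/2 := by
    simp only [hc_def, pow_zero, one_mul]
    ring
  have hcle : ∀ k, k ≤ d → c k ≤ 1/2 := fun k hk => hcd ▸ hcmono.monotone hk
  have hclt : ∀ k, k < d → c k < 1/2 := fun k hk => hcd ▸ hcmono hk
  have hT0 : ∀ x : ℝ, 0 ≤ β * x → β * x < 1/2 → T x = β * x := by
    intro x ha hb
    rw [hT x]
    have hf : ⌊β * x + 1/2⌋ = 0 :=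
      Int.floor_eq_zero_iff.mpr (Set.mem_Ico.mpr ⟨by linarith, by linarith⟩)
    rw [hf]
    push_cast
    ring
  have hT1 : ∀ x : ℝ, 1/2 ≤ β * x → β * x < 3/2 → T x = β * x - 1 := by
    intro x ha hb
    rw [hT x]
    have hf : ⌊β * x + 1/2⌋ = 1 := by
      rw [Int.floor_eq_iff]
      constructor <;> push_cast <;> linarith
    rw [hf]
    push_cast
    ring
  have hTl : T (-(1:ℝ)/2) = c 0 := by
    rw [hT]
    have hf : ⌊β * (-(1:ℝ)/2) + 1/2⌋ = -1 := by
      rw [Int.floor_eq_iff]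
      constructor <;> push_cast <;> nlinarith
    rw [hf]
    simp only [hc_def, pow_zero, one_mul]
    push_cast
    ring
  have horb : ∀ k, 1 ≤ k → k ≤ d → T^[k] (-(1:ℝ)/2) = c (k-1) := by
    intro k hk1 hkd
    induction k with
    | zero => omega
    | succ m ih =>
      rcases Nat.eq_zero_or_pos m with hm | hm
      · subst hm; simpa using hTl
      · rw [Function.iterate_succ_apply', ih hm (by omega)]
        have e : β * c (m-1) = c m := by
          rw [hmul]; congr 1; omega
        rw [hT0 _ (by rw [e]; exact (hcpos m).le) (by rw [e]; exact hclt m (by omega)), e]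
        simp
  have hY' : ∀ k, 1 ≤ k → k ≤ d → Y k = Set.Ico (c (k-1)) (c k) := by
    intro k hk1 hkd
    rw [hY k]
    by_cases hk : k = d
    · subst hk
      rw [if_pos rfl, horb _ (by omega) le_rfl, hcd]
    · rw [if_neg hk, horb k hk1 hkd, horb (k+1) (by omega) (by omega)]
      simp
  have hN' : ∀ k, 1 ≤ k → k ≤ d → N k = Set.Ico (-(c k)) (-(c (k-1))) := by
    intro k hk1 hkd
    rw [hN k]
    by_cases hk : k = d
    · subst hk
      rw [if_pos rfl, horb _ (by omega) le_rfl, hcd]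
      norm_num
    · rw [if_neg hk, horb k hk1 hkd, horb (k+1) (by omega) (by omega)]
      simp
  have hYU : (⋃ k ∈ Finset.Icc 1 d, Y k) = Set.Ico (c 0) (c d) := by
    rw [← iUnion_Ico_chain c hcmono.monotone d (by omega)]
    apply Set.iUnion₂_congr
    intro k hk
    simp only [Finset.mem_Icc] at hk
    exact hY' k hk.1 hk.2
  have hNU : (⋃ k ∈ Finset.Icc 1 d, N k) = Set.Ico (-(c d)) (-(c 0)) := by
    rw [← iUnion_Ico_chain_neg c hcmono.monotone d (by omega)]
    apply Set.iUnion₂_congr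
    intro k hk
    simp only [Finset.mem_Icc] at hk
    exact hN' k hk.1 hk.2
  refine ⟨?_, ?_, ?_, ?_, ?_⟩
  · rw [hTl, hc0]
  · have hUU : (⋃ k ∈ Finset.Icc 1 d, (Y k ∪ N k)) =
        (⋃ k ∈ Finset.Icc 1 d, Y k) ∪ (⋃ k ∈ Finset.Icc 1 d, N k) := by
      ext x
      simp only [Set.mem_iUnion, Set.mem_union]
      constructor
      · rintro ⟨i, hi, h | h⟩
        · exact Or.inl ⟨i, hi, h⟩
        · exact Or.inr ⟨i, hi, h⟩
      · rintro (⟨i, hi, h⟩ | ⟨i, hi, h⟩)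
        · exact ⟨i, hi, Or.inl h⟩
        · exact ⟨i, hi, Or.inr h⟩
    rw [hUU, hYU, hNU, hX, hcd, hc0, Set.union_comm]
    have e1 : -(1 - β/2) = β/2 - 1 := by ring
    have e2 : -((1:ℝ)/2) = -(1:ℝ)/2 := by ring
    rw [e1, e2]
  · intro k hk j hj
    simp only [Finset.mem_Icc] at hk hj
    have hYk := hY' k hk.1 hk.2
    have hYj := hY' j hj.1 hj.2
    have hNk := hN' k hk.1 hk.2
    have hNj := hN' j hj.1 hj.2
    constructor
    · intro hne
      rcases Nat.lt_or_ge k j with h | h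
      · have hmono : c k ≤ c (j-1) := hcmono.monotone (by omega)
        constructor
        · rw [hYk, hYj]; exact Ico_disj' hmono
        · rw [hNk, hNj, Set.inter_comm]; exact Ico_disj' (neg_le_neg hmono)
      · have hlt' : j < k := by omega
        have hmono : c j ≤ c (k-1) := hcmono.monotone (by omega)
        constructor
        · rw [hYk, hYj, Set.inter_comm]; exact Ico_disj' hmono
        · rw [hNk, hNj]; exact Ico_disj' (neg_le_neg hmono)
    · rw [hYk, hNj, Set.inter_comm]
      apply Ico_disj'
      have p1 : 0 < c (j-1) := hcpos _
      have p2 : 0 < c (k-1) := hcpos _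
      linarith
  · intro k hk
    simp only [Finset.mem_Icc] at hk
    obtain ⟨hk1, hk2⟩ := hk
    have hkd : k ≤ d := by omega
    have hkd' : k + 1 ≤ d := by omega
    rw [hY' k hk1 hkd, hY' (k+1) (by omega) hkd']
    simp only [Nat.add_sub_cancel]
    have hck : β * c (k-1) = c k := by
      rw [hmul]; congr 1; omega
    have key : ∀ x ∈ Set.Ico (c (k-1)) (c k), T x = β * x := by
      rintro x ⟨ha, hb⟩
      have h0 : 0 < c (k-1) := hcpos _
      apply hT0
      · nlinarith
      · have hlt2 : β * x < β * c k := by nlinarith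
        rw [hmul] at hlt2
        have := hcle (k+1) hkd'
        linarith
    refine ⟨?_, ?_, ?_⟩
    · rintro x ⟨ha, hb⟩
      rw [key x ⟨ha, hb⟩]
      constructor
      · rw [← hck]; nlinarith
      · rw [← hmul k]; nlinarith
    · intro x hx y hy hxy
      rw [key x hx, key y hy] at hxy
      exact mul_left_cancel₀ (ne_of_gt hβpos) hxy
    · rintro y ⟨ha, hb⟩
      have m1 : c (k-1) ≤ y / β := by
        rw [le_div_iff₀ hβpos]
        nlinarith
      have m2 : y / β < c k := by
        rw [div_lt_iff₀ hβpos]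
        have := hmul k
        nlinarith
      refine ⟨y / β, ⟨m1, m2⟩, ?_⟩
      rw [key _ ⟨m1, m2⟩]
      field_simp
  · rw [hY' d (by omega) le_rfl, hNU]
    have hcd1 : β * c (d-1) = c d := by
      rw [hmul]; congr 1; omega
    ext y
    simp only [Set.mem_image, Set.mem_Ico]
    constructor
    · rintro ⟨x, ⟨ha, hb⟩, rfl⟩
      have hx1 : 1/2 ≤ β * x := by
        rw [← hcd, ← hcd1]; nlinarith
      have hx2 : β * x < 3/2 := by nlinarith [hcd]
      rw [hT1 x hx1 hx2]
      constructor
      · rw [hcd]; linarith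
      · have hlt2 : β * x < β * c d := by nlinarith
        rw [hcd] at hlt2
        rw [hc0]
        linarith
    · rintro ⟨ha, hb⟩
      rw [hcd] at ha
      rw [hc0] at hb
      have m1 : c (d-1) ≤ (y+1) / β := by
        rw [le_div_iff₀ hβpos]
        have e : c (d-1) * β = 1/2 := by rw [mul_comm, hcd1, hcd]
        linarith
      have m2 : (y+1) / β < c d := by
        rw [div_lt_iff₀ hβpos]
        have e : c d * β = β/2 := by rw [hcd]; ring
        linarith
      have hb2 : β * ((y+1)/β) = y + 1 := by field_simp
      refine ⟨(y+1)/β, ⟨m1, m2⟩, ?_⟩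
      rw [hT1 _ (by rw [hb2]; linarith) (by rw [hb2]; linarith), hb2]
      ring
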